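/- arXiv:2604.05167 — 2 statements merged into one kernel-verified Lean document; each statement's English description precedes it below -/
import Mathlib

section
/- Let S₁, …, S_n, S_{new} be exchangeable real-valued random variables that are almost surely distinct, let τ ∈ (0,1), and let k = ⌈(n+1)τ⌉ with k ≤ n. If ρ̂ = S_{(k)} is the k-th order statistic of S₁,…,S_n, then P(S_{new} ≤ ρ̂) ≥ k/(n+1) ≥ τ. -/
open MeasureTheory

/-- The `k`-th order statistic (1-indexed) of `x : Fin n → ℝ`. -/
noncomputable def orderStat {n : ℕ} (k : ℕ) (x : Fin n → ℝ) : ℝ := by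
  classical
  exact ((Multiset.map x (Finset.univ : Finset (Fin n)).val).sort (· ≤ ·)).getD (k - 1) 0

open Finset
open scoped ENNReal

open Finset in
lemma le_orderStat {n k : ℕ} (hk1 : 1 ≤ k) (hkn : k ≤ n) (x : Fin n → ℝ) (t : ℝ)
    (h : (univ.filter fun i => x i < t).card < k) : t ≤ orderStat k x := by
  classical
  set M : Multiset ℝ := Multiset.map x (univ : Finset (Fin n)).val with hM
  set l : List ℝ := M.sort (· ≤ ·) with hl
  have hsort : l.Pairwise (· ≤ ·) := Multiset.pairwise_sort _ _
  have hlen : l.length = n := by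
    rw [hl, Multiset.length_sort, hM, Multiset.card_map]; simp
  have hkl : k - 1 < l.length := by omega
  have hget : orderStat k x = l.get ⟨k - 1, hkl⟩ := by
    rw [orderStat]
    exact List.getD_eq_getElem _ _ hkl
  rw [hget]
  by_contra hcon
  push_neg at hcon
  -- count of elements < t
  have hcnt : l.countP (fun a => decide (a < t)) = (univ.filter fun i => x i < t).card := by
    have hcoe : (l : Multiset ℝ) = M := Multiset.sort_eq _ _
    have : Multiset.countP (fun a => decide (a < t)) M
        = (univ.filter fun i => x i < t).card := by
      rw [hM, Multiset.countP_map]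
      simp only [decide_eq_true_eq]
      rw [Finset.card_def, Finset.filter_val]
    rw [← this, ← hcoe, Multiset.coe_countP]
    simp
  have hk_le : k ≤ l.countP (fun a => decide (a < t)) := by
    have htake : (l.take k).countP (fun a => decide (a < t)) = (l.take k).length := by
      rw [List.countP_eq_length]
      intro a ha
      obtain ⟨i, hi, rfl⟩ := List.mem_iff_getElem.mp ha
      have hik : i < k := lt_of_lt_of_le hi (by simp)
      have hil : i < l.length := by
        have : (l.take k).length = min k l.length := List.length_take
        omega
      rw [List.getElem_take]
      simp only [decide_eq_true_eq]
      calc l[i] ≤ l.get ⟨k - 1, hkl⟩ := by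
            apply hsort.rel_get_of_le
            simp [Fin.le_def]; omega
        _ < t := hcon
    have hlt : (l.take k).length = k := by rw [List.length_take]; omega
    calc k = (l.take k).countP (fun a => decide (a < t)) := by rw [htake, hlt]
      _ ≤ l.countP (fun a => decide (a < t)) := (List.take_sublist k l).countP_le
  omega

lemma card_filter_perm {ι : Type*} [Fintype ι] [DecidableEq ι] (π : Equiv.Perm ι)
    (q : ι → Prop) [DecidablePred q] :
    #(univ.filter fun m => q (π m)) = #(univ.filter q) := by
  apply Finset.card_bij (fun m _ => π m)
  · intro a ha; simp at ha ⊢; exact ha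
  · intro a _ b _ hab; exact π.injective hab
  · intro b hb; refine ⟨π.symm b, by simp at hb ⊢; simpa using hb, by simp⟩

lemma card_filter_castSucc {n : ℕ} (q : Fin (n + 1) → Prop) [DecidablePred q]
    (hlast : ¬ q (Fin.last n)) :
    #(univ.filter fun m => q m) = #(univ.filter fun i : Fin n => q i.castSucc) := by
  apply (Finset.card_bij (fun (i : Fin n) _ => i.castSucc) ?_ ?_ ?_).symm
  · intro a ha; simp at ha ⊢; exact ha
  · intro a _ b _ hab; exact Fin.castSucc_injective n hab
  · intro m hm
    simp at hm
    have hne : m ≠ Fin.last n := by rintro rfl; exact hlast hm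
    exact ⟨m.castPred hne, by simp [hm]⟩

lemma measurable_rank {n : ℕ} :
    Measurable (fun y : Fin (n + 1) → ℝ => #(univ.filter fun m => y m < y (Fin.last n))) := by
  simp only [Finset.card_filter]
  apply Finset.measurable_sum
  intro m _
  exact Measurable.ite
    (measurableSet_lt (measurable_pi_apply m) (measurable_pi_apply _))
    measurable_const measurable_const

/-- Split conformal coverage: for exchangeable a.s. distinct scores
`S₁,…,Sₙ,S_new`, `τ ∈ (0,1)`, and `k = ⌈(n+1)τ⌉ ≤ n`, with `ρ̂` the `k`-th
order statistic of the first `n` scores, `P(S_new ≤ ρ̂) ≥ k/(n+1) ≥ τ`. -/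
theorem split_conformal_coverage {Ω : Type*} [MeasurableSpace Ω]
    (P : Measure Ω) [IsProbabilityMeasure P]
    (n : ℕ) (S : Fin (n + 1) → Ω → ℝ) (hmeas : ∀ i, Measurable (S i))
    (hexch : ∀ π : Equiv.Perm (Fin (n + 1)),
      Measure.map (fun ω => fun i => S (π i) ω) P =
        Measure.map (fun ω => fun i => S i ω) P)
    (hdist : ∀ᵐ ω ∂P, ∀ i j : Fin (n + 1), i ≠ j → S i ω ≠ S j ω)
    (τ : ℝ) (hτ : τ ∈ Set.Ioo (0 : ℝ) 1)
    (k : ℕ) (hk : k = ⌈((n : ℝ) + 1) * τ⌉₊) (hkn : k ≤ n) :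
    τ ≤ (k : ℝ) / ((n : ℝ) + 1) ∧
    (k : ℝ) / ((n : ℝ) + 1) ≤
      (P {ω | S (Fin.last n) ω ≤
        orderStat k (fun i : Fin n => S i.castSucc ω)}).toReal := by
  classical
  obtain ⟨hτ0, hτ1⟩ := hτ
  have hnp : (0 : ℝ) < (n : ℝ) + 1 := by positivity
  have hk1 : 1 ≤ k := by
    rw [hk]; exact Nat.one_le_iff_ne_zero.mpr (Nat.pos_iff_ne_zero.mp
      (Nat.ceil_pos.mpr (by positivity)))
  have hτk : τ ≤ (k : ℝ) / ((n : ℝ) + 1) := by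
    rw [le_div_iff₀ hnp]
    have h1 := Nat.le_ceil (((n : ℝ) + 1) * τ)
    rw [← hk] at h1
    linarith
  refine ⟨hτk, ?_⟩
  -- setup
  set G : (Fin (n + 1) → ℝ) → ℕ :=
    fun y => #(univ.filter fun m => y m < y (Fin.last n)) with hG_def
  have hG : Measurable G := measurable_rank
  have hGr : ∀ r : ℕ, MeasurableSet (G ⁻¹' {r}) :=
    fun r => hG (measurableSet_singleton r)
  have hTπ : ∀ σ : Equiv.Perm (Fin (n + 1)),
      Measurable (fun ω => fun i => S (σ i) ω) :=
    fun σ => measurable_pi_lambda _ (fun i => hmeas _)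
  set g : Fin (n + 1) → Ω → ℕ :=
    fun j ω => #(univ.filter fun m => S m ω < S j ω) with hg_def
  -- G composed with permuted scores computes g j
  have hgG : ∀ (j : Fin (n + 1)) (ω : Ω),
      G (fun i => S ((Equiv.swap j (Fin.last n)) i) ω) = g j ω := by
    intro j ω
    simp only [hG_def, hg_def, Equiv.swap_apply_right]
    exact card_filter_perm (Equiv.swap j (Fin.last n)) (fun m => S m ω < S j ω)
  -- distinctness set
  set N : Set Ω := toMeasurable P {ω | ¬ ∀ i j : Fin (n + 1), i ≠ j → S i ω ≠ S j ω}
    with hN_def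
  have hNmeas : MeasurableSet N := measurableSet_toMeasurable _ _
  have hN0 : P N = 0 := by
    rw [hN_def, measure_toMeasurable]
    exact hdist
  set D : Set Ω := Nᶜ with hD_def
  have hDmeas : MeasurableSet D := hNmeas.compl
  have hDc : P Dᶜ = 0 := by rw [hD_def, compl_compl]; exact hN0
  have hPD : P D = 1 := by
    have := measure_compl hNmeas (measure_ne_top P N)
    rw [hN0, tsub_zero, measure_univ] at this
    exact this
  have hDdist : ∀ ω ∈ D, ∀ i j : Fin (n + 1), i ≠ j → S i ω ≠ S j ω := by
    intro ω hω
    by_contra h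
    exact hω (subset_toMeasurable _ _ h)
  -- injectivity of ranks on D
  have hmono : ∀ (ω : Ω) (a b : Fin (n + 1)), S a ω < S b ω → g a ω < g b ω := by
    intro ω a b hab
    have hsub : (univ.filter fun m => S m ω < S a ω) ⊆
        (univ.filter fun m => S m ω < S b ω) := by
      intro m hm; simp only [mem_filter, mem_univ, true_and] at hm ⊢
      exact lt_trans hm hab
    exact Finset.card_lt_card ((Finset.ssubset_iff_of_subset hsub).mpr
      ⟨a, by simp [hab], by simp⟩)
  have hginj : ∀ ω ∈ D, ∀ a b : Fin (n + 1), g a ω = g b ω → a = b := by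
    intro ω hω a b hab
    by_contra hne
    rcases lt_or_gt_of_ne (hDdist ω hω a b hne) with h | h
    · exact absurd hab (ne_of_lt (hmono ω a b h))
    · exact absurd hab (ne_of_gt (hmono ω b a h))
  have hgle : ∀ (j : Fin (n + 1)) (ω : Ω), g j ω ≤ n := by
    intro j ω
    have hsub : (univ.filter fun m => S m ω < S j ω) ⊆ univ.erase j := by
      intro m hm
      simp only [mem_filter, mem_univ, true_and] at hm
      exact Finset.mem_erase.mpr ⟨by rintro rfl; exact lt_irrefl _ hm, mem_univ m⟩
    calc g j ω ≤ #(univ.erase j) := Finset.card_le_card hsub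
      _ = n := by
        rw [Finset.card_erase_of_mem (mem_univ j), Finset.card_univ, Fintype.card_fin]
        simp
  -- key uniformity
  have key : ∀ r : ℕ, r ≤ n →
      P {ω | g (Fin.last n) ω = r} = ((n : ℝ≥0∞) + 1)⁻¹ := by
    intro r hr
    have hArepr : ∀ j : Fin (n + 1), {ω | g j ω = r} =
        (fun ω => fun i => S ((Equiv.swap j (Fin.last n)) i) ω) ⁻¹' (G ⁻¹' {r}) := by
      intro j
      ext ω
      simp only [Set.mem_setOf_eq, Set.mem_preimage, Set.mem_singleton_iff, hgG]
    have hAmeas : ∀ j : Fin (n + 1), MeasurableSet {ω | g j ω = r} := by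
      intro j
      rw [hArepr j]
      exact (hTπ _) (hGr r)
    have hAP : ∀ j : Fin (n + 1), P {ω | g j ω = r} = P {ω | g (Fin.last n) ω = r} := by
      intro j
      rw [hArepr j, hArepr (Fin.last n)]
      rw [← Measure.map_apply (hTπ _) (hGr r), ← Measure.map_apply (hTπ _) (hGr r),
        hexch (Equiv.swap j (Fin.last n)), hexch (Equiv.swap (Fin.last n) (Fin.last n))]
    have hsurj : ∀ ω ∈ D, ∃ j, g j ω = r := by
      intro ω hω
      have hinj : Function.Injective
          (fun j : Fin (n + 1) => (⟨g j ω, Nat.lt_succ_of_le (hgle j ω)⟩ : Fin (n + 1))) := by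
        intro a b hab
        exact hginj ω hω a b (by simpa [Fin.mk.injEq] using hab)
      obtain ⟨j, hj⟩ := Finite.injective_iff_surjective.mp hinj ⟨r, Nat.lt_succ_of_le hr⟩
      exact ⟨j, by simpa [Fin.mk.injEq] using hj⟩
    have hdisj : ((univ : Finset (Fin (n + 1))) : Set (Fin (n + 1))).PairwiseDisjoint
        (fun j => {ω | g j ω = r} ∩ D) := by
      intro a _ b _ hab
      apply Set.disjoint_left.mpr
      rintro ω ⟨haω, hωD⟩ ⟨hbω, _⟩
      exact hab (hginj ω hωD a b (haω.trans hbω.symm))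
    have hsum : ∑ j : Fin (n + 1), P ({ω | g j ω = r} ∩ D) = 1 := by
      rw [← measure_biUnion_finset hdisj (fun j _ => (hAmeas j).inter hDmeas)]
      apply le_antisymm
      · exact le_trans (measure_mono (Set.subset_univ _)) (by simp)
      · calc (1 : ℝ≥0∞) = P D := hPD.symm
          _ ≤ _ := by
            apply measure_mono
            intro ω hω
            obtain ⟨j, hj⟩ := hsurj ω hω
            exact Set.mem_biUnion (mem_univ j) ⟨hj, hω⟩
    have hconst : ∀ j : Fin (n + 1), P ({ω | g j ω = r} ∩ D) =
        P {ω | g (Fin.last n) ω = r} := by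
      intro j
      rw [measure_inter_conull hDc]
      exact hAP j
    rw [Finset.sum_congr rfl (fun j _ => hconst j), Finset.sum_const, Finset.card_univ,
      Fintype.card_fin, nsmul_eq_mul] at hsum
    have hne : ((n + 1 : ℕ) : ℝ≥0∞) ≠ 0 := by simp
    have hnetop : ((n + 1 : ℕ) : ℝ≥0∞) ≠ ⊤ := by simp
    have : P {ω | g (Fin.last n) ω = r} =
        ((n + 1 : ℕ) : ℝ≥0∞)⁻¹ * (((n + 1 : ℕ) : ℝ≥0∞) * P {ω | g (Fin.last n) ω = r}) := by
      rw [← mul_assoc, ENNReal.inv_mul_cancel hne hnetop, one_mul]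
    rw [this, hsum, mul_one]
    push_cast
    rfl
  -- measure of the rank event
  have hsum2 : P {ω | g (Fin.last n) ω < k} = (k : ℝ≥0∞) * ((n : ℝ≥0∞) + 1)⁻¹ := by
    have hun : {ω | g (Fin.last n) ω < k} =
        ⋃ r ∈ Finset.range k, {ω | g (Fin.last n) ω = r} := by
      ext ω
      simp only [Set.mem_setOf_eq, Set.mem_iUnion, Finset.mem_range, exists_prop]
      exact ⟨fun h => ⟨g (Fin.last n) ω, h, rfl⟩, by rintro ⟨r, hr, h⟩; omega⟩
    have hmeas' : ∀ r : ℕ, MeasurableSet {ω | g (Fin.last n) ω = r} := by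
      intro r
      have : {ω | g (Fin.last n) ω = r} = (fun ω => fun i => S i ω) ⁻¹' (G ⁻¹' {r}) := by
        ext ω
        simp only [Set.mem_setOf_eq, Set.mem_preimage, Set.mem_singleton_iff]
        exact Iff.rfl
      rw [this]
      exact (measurable_pi_lambda _ hmeas) (hGr r)
    have hdisj2 : ((Finset.range k : Finset ℕ) : Set ℕ).PairwiseDisjoint
        (fun r => {ω | g (Fin.last n) ω = r}) := by
      intro a _ b _ hab
      apply Set.disjoint_left.mpr
      rintro ω ha hb
      exact hab (ha.symm.trans hb)
    rw [hun, measure_biUnion_finset hdisj2 (fun r _ => hmeas' r),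
      Finset.sum_congr rfl (fun r hr => key r (by have := Finset.mem_range.mp hr; omega)),
      Finset.sum_const, Finset.card_range, nsmul_eq_mul]
  -- inclusion into the coverage event
  have hsub : {ω | g (Fin.last n) ω < k} ⊆
      {ω | S (Fin.last n) ω ≤ orderStat k (fun i : Fin n => S i.castSucc ω)} := by
    intro ω hω
    simp only [Set.mem_setOf_eq] at hω ⊢
    apply le_orderStat hk1 hkn
    have hcc := card_filter_castSucc (fun m => S m ω < S (Fin.last n) ω) (lt_irrefl _)
    rw [← hcc]
    exact hω
  -- conclude
  have hEP : (k : ℝ≥0∞) * ((n : ℝ≥0∞) + 1)⁻¹ ≤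
      P {ω | S (Fin.last n) ω ≤ orderStat k (fun i : Fin n => S i.castSucc ω)} :=
    hsum2 ▸ measure_mono hsub
  have htr : ((k : ℝ≥0∞) * ((n : ℝ≥0∞) + 1)⁻¹).toReal = (k : ℝ) / ((n : ℝ) + 1) := by
    rw [ENNReal.toReal_mul, ENNReal.toReal_inv]
    have : ((n : ℝ≥0∞) + 1) = ((n + 1 : ℕ) : ℝ≥0∞) := by push_cast; rfl
    rw [this, ENNReal.toReal_natCast, ENNReal.toReal_natCast]
    push_cast
    ring
  calc (k : ℝ) / ((n : ℝ) + 1) = ((k : ℝ≥0∞) * ((n : ℝ≥0∞) + 1)⁻¹).toReal := htr.symm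
    _ ≤ _ := ENNReal.toReal_mono (measure_ne_top P _) hEP
end

section
/- Let F : ℝ → ℝ be differentiable on [ρ − δ, ρ + δ] with derivative bounded below by κ > 0 there, F(ρ) = τ, and let F̂ : ℝ → ℝ be nondecreasing with sup_{r ∈ [ρ−δ, ρ+δ]} |F̂(r) − F(r)| ≤ κη/2 for some 0 < η ≤ δ. Then any ρ̂ satisfying F̂(r) < τ for r < ρ̂ and F̂(ρ̂) ≥ τ (i.e., ρ̂ = inf{r : F̂(r) ≥ τ}) satisfies |ρ̂ − ρ| ≤ η. -/
/-- Quantile-stability lemma: if `F` is differentiable on `[ρ−δ, ρ+δ]` with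
derivative bounded below by `κ > 0`, `F(ρ) = τ`, and the nondecreasing `F̂`
uniformly approximates `F` within `κη/2` there (`0 < η ≤ δ`), then the
generalized `τ`-quantile `ρ̂` of `F̂` satisfies `|ρ̂ − ρ| ≤ η`. -/
theorem quantile_stability (ρ δ κ η τ : ℝ)
    (hδ : 0 < δ) (hκ : 0 < κ) (hη : 0 < η) (hηδ : η ≤ δ)
    (F Fhat : ℝ → ℝ) (f' : ℝ → ℝ)
    (hdiff : ∀ r ∈ Set.Icc (ρ - δ) (ρ + δ),
      HasDerivWithinAt F (f' r) (Set.Icc (ρ - δ) (ρ + δ)) r)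
    (hlb : ∀ r ∈ Set.Icc (ρ - δ) (ρ + δ), κ ≤ f' r)
    (hFρ : F ρ = τ)
    (hmono : Monotone Fhat)
    (happrox : ∀ r ∈ Set.Icc (ρ - δ) (ρ + δ), |Fhat r - F r| ≤ κ * η / 2)
    (ρhat : ℝ) (hρhat1 : ∀ r, r < ρhat → Fhat r < τ) (hρhat2 : τ ≤ Fhat ρhat) :
    |ρhat - ρ| ≤ η := by
  set D := Set.Icc (ρ - δ) (ρ + δ) with hD
  have hconv : Convex ℝ D := convex_Icc _ _
  have hcont : ContinuousOn F D := fun r hr => (hdiff r hr).continuousWithinAt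
  have hdiffOn : DifferentiableOn ℝ F (interior D) := fun r hr =>
    ((hdiff r (interior_subset hr)).differentiableWithinAt).mono interior_subset
  have hderiv_eq : ∀ r ∈ interior D, deriv F r = f' r := by
    intro r hr
    have : HasDerivAt F (f' r) r :=
      (hdiff r (interior_subset hr)).hasDerivAt (mem_interior_iff_mem_nhds.mp hr)
    exact this.deriv
  have hge : ∀ r ∈ interior D, κ ≤ deriv F r := fun r hr =>
    (hderiv_eq r hr).symm ▸ hlb r (interior_subset hr)
  have key := hconv.mul_sub_le_image_sub_of_le_deriv hcont hdiffOn hge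
  have hρD : ρ ∈ D := by constructor <;> simp [hD] <;> linarith
  have hpD : ρ + η ∈ D := by constructor <;> simp [hD] <;> linarith
  have hmD : ρ - η ∈ D := by constructor <;> simp [hD] <;> linarith
  have h1 : κ * η ≤ F (ρ + η) - F ρ := by
    have := key ρ hρD (ρ + η) hpD (by linarith)
    linarith [this]
  have h2 : κ * η ≤ F ρ - F (ρ - η) := by
    have := key (ρ - η) hmD ρ hρD (by linarith)
    linarith [this]
  have ha1 := abs_le.mp (happrox (ρ + η) hpD)
  have ha2 := abs_le.mp (happrox (ρ - η) hmD)
  have hκη : 0 < κ * η := mul_pos hκ hη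
  -- ρhat ≤ ρ + η
  have hub : ρhat ≤ ρ + η := by
    by_contra h
    push_neg at h
    have := hρhat1 (ρ + η) h
    have : τ + κ * η / 2 ≤ Fhat (ρ + η) := by linarith [ha1.1, h1, hFρ.symm ▸ h1]
    linarith [hρhat1 (ρ + η) h]
  have hlbd : ρ - η ≤ ρhat := by
    by_contra h
    push_neg at h
    have hle : Fhat ρhat ≤ Fhat (ρ - η) := hmono h.le
    have : Fhat (ρ - η) ≤ τ - κ * η / 2 := by linarith [ha2.2, h2]
    linarith
  rw [abs_le]
  constructor <;> linarith
end
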